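/- Let K be a unital (possibly non-commutative) ring and let T be the ring of polynomials in k commuting indeterminates over K, realized as the additive monoid algebra of K over the additive monoid (Fin k →₀ ℕ). Let A be a right ideal of T whose right annihilator A^r = { t ∈ T | ∀ a ∈ A, a * t = 0 } is non-trivial (contains a non-zero element). Then there exists a non-zero constant c ∈ K (i.e. a non-zero scalar multiple of the monomial of exponent 0) such that a * c = 0 for every a ∈ A. -/

import Mathlib

open AddMonoidAlgebra Finsupp


/-- **McCoy's theorem for right ideals** : if a right ideal `A` of the polynomial ring
in `k` commuting indeterminates over a unital (possibly non-commutative) ring `K`,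
realized as `AddMonoidAlgebra K (Fin k →₀ ℕ)`, has a non-trivial right annihilator,
then there is a non-zero constant `c ∈ K` with `a * c = 0` for all `a ∈ A`. -/
theorem mccoy_right_ideal_addMonoidAlgebra {K : Type*} [Ring K] {k : ℕ}
    (A : AddSubgroup (AddMonoidAlgebra K (Fin k →₀ ℕ)))
    (hA : ∀ a ∈ A, ∀ t : AddMonoidAlgebra K (Fin k →₀ ℕ), a * t ∈ A)
    (hann : ∃ t : AddMonoidAlgebra K (Fin k →₀ ℕ), t ≠ 0 ∧ ∀ a ∈ A, a * t = 0) :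
    ∃ c : K, c ≠ 0 ∧ ∀ a ∈ A, a * AddMonoidAlgebra.single (0 : Fin k →₀ ℕ) c = 0 := by
  classical
  -- leading monomial spec
  have lead_spec : ∀ t : AddMonoidAlgebra K (Fin k →₀ ℕ), t ≠ 0 →
      ∃ d : Lex (Fin k →₀ ℕ), t.coeff (ofLex d) ≠ 0 ∧ (∀ l, d < toLex l → t.coeff l = 0) ∧
        (∀ l ∈ t.coeff.support, toLex l ≤ d) := by
    intro t ht
    have hne : (t.coeff.support.image toLex).Nonempty :=
      (Finsupp.support_nonempty_iff.mpr (mt AddMonoidAlgebra.coeff_eq_zero.mp ht)).image _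
    refine ⟨(t.coeff.support.image toLex).max' hne, ?_, ?_, ?_⟩
    · obtain ⟨l, hl, hl2⟩ := Finset.mem_image.mp ((t.coeff.support.image toLex).max'_mem hne)
      have : ofLex ((t.coeff.support.image toLex).max' hne) = l := by rw [← hl2]; rfl
      rw [this]
      exact Finsupp.mem_support_iff.mp hl
    · intro l hl
      by_contra h
      exact absurd (Finset.le_max' _ _ (Finset.mem_image_of_mem toLex
        (Finsupp.mem_support_iff.mpr h))) (not_le.mpr hl)
    · intro l hl
      exact Finset.le_max' _ _ (Finset.mem_image_of_mem toLex hl)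
  set D : Set (Lex (Fin k →₀ ℕ)) :=
    {d | ∃ t : AddMonoidAlgebra K (Fin k →₀ ℕ), t ≠ 0 ∧ (∀ a ∈ A, a * t = 0) ∧
      t.coeff (ofLex d) ≠ 0 ∧ (∀ l, d < toLex l → t.coeff l = 0)} with hD
  have hDne : D.Nonempty := by
    obtain ⟨g₀, hg₀, hg₀a⟩ := hann
    obtain ⟨d₀, h1, h2, _⟩ := lead_spec g₀ hg₀
    exact ⟨d₀, g₀, hg₀, hg₀a, h1, h2⟩
  obtain ⟨d, hdD, hmin⟩ := (wellFounded_lt (α := Lex (Fin k →₀ ℕ))).has_min D hDne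
  obtain ⟨g, hg0, hgann, hgd, hgtop⟩ := hdD
  set d' : Fin k →₀ ℕ := ofLex d with hd'
  refine ⟨g.coeff d', hgd, ?_⟩
  intro a ha
  by_contra hne
  obtain ⟨s₀, hs₀⟩ : ∃ s, (a * AddMonoidAlgebra.single (0 : Fin k →₀ ℕ) (g.coeff d')).coeff s ≠ 0 := by
    by_contra h
    push_neg at h
    exact hne (AddMonoidAlgebra.ext (Finsupp.ext fun s => h s))
  rw [AddMonoidAlgebra.coeff_mul_single_zero] at hs₀
  set S : Finset (Fin k →₀ ℕ) :=
    a.coeff.support.filter (fun s => AddMonoidAlgebra.single (0 : Fin k →₀ ℕ) (a.coeff s) * g ≠ 0) with hS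
  have hs₀S : s₀ ∈ S := by
    rw [hS, Finset.mem_filter]
    constructor
    · exact Finsupp.mem_support_iff.mpr fun h => hs₀ (by rw [h, zero_mul])
    · intro h
      apply hs₀
      have := Finsupp.ext_iff.mp (congrArg AddMonoidAlgebra.coeff h) d'
      rwa [AddMonoidAlgebra.coeff_single_zero_mul] at this
      
  have hSne : (S.image toLex).Nonempty := ⟨toLex s₀, Finset.mem_image_of_mem _ hs₀S⟩
  set j' : Lex (Fin k →₀ ℕ) := (S.image toLex).max' hSne with hj'
  set j : Fin k →₀ ℕ := ofLex j' with hj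
  have hjS : j ∈ S := by
    obtain ⟨l, hl, hl2⟩ := Finset.mem_image.mp ((S.image toLex).max'_mem hSne)
    have : j = l := by rw [hj, hj', ← hl2]; rfl
    rwa [this]
  have hjsupp : j ∈ a.coeff.support := (Finset.mem_filter.mp hjS).1
  have hjne : AddMonoidAlgebra.single (0 : Fin k →₀ ℕ) (a.coeff j) * g ≠ 0 :=
    (Finset.mem_filter.mp hjS).2
  have hjmax : ∀ s ∈ S, toLex s ≤ j' := fun s hs =>
    Finset.le_max' _ _ (Finset.mem_image_of_mem _ hs)
  -- key computation : a j * g d' = 0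
  have hkey : a.coeff j * g.coeff d' = 0 := by
    have h0 : (a * g).coeff (j + d') = 0 := by rw [hgann a ha]; rfl
    rw [AddMonoidAlgebra.coeff_mul] at h0
    have heval : (Finsupp.sum a.coeff fun s as => Finsupp.sum g.coeff fun l gl =>
        if s + l = j + d' then as * gl else 0) = a.coeff j * g.coeff d' := by
      rw [Finsupp.sum]
      rw [Finset.sum_eq_single j]
      · rw [Finsupp.sum]
        rw [Finset.sum_eq_single d']
        · simp
        · intro l hl hne'
          rw [if_neg]
          intro hc
          exact hne' (add_left_cancel hc)
        · intro hd
          rw [if_pos rfl, Finsupp.notMem_support_iff.mp hd, mul_zero]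
      · intro s hs hsj
        rcases lt_trichotomy (toLex s) j' with hlt | heq | hgt
        · -- s < j : every l in the sum with s + l = j + d' has toLex l > d
          rw [Finsupp.sum]
          apply Finset.sum_eq_zero
          intro l hl
          rw [if_neg]
          intro hc
          have h1 : toLex s + toLex l < toLex j + toLex l :=
            add_lt_add_left hlt (toLex l)
          have h2 : toLex (s + l) = toLex (j + d') := by rw [hc]
          have h3 : toLex j + toLex d' < toLex j + toLex l := by
            calc toLex j + toLex d' = toLex (j + d') := rfl
            _ = toLex (s + l) := h2.symm
            _ = toLex s + toLex l := rfl
            _ < toLex j + toLex l := h1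
          have h4 : d < toLex l := by
            have := lt_of_add_lt_add_left h3
            simpa [hd'] using this
          exact absurd (hgtop l h4) (Finsupp.mem_support_iff.mp hl)
        · exact absurd (show s = j by rw [hj, ← heq]; rfl) hsj
        · -- s > j : s ∉ S, so single 0 (a s) * g = 0
          have hsnS : s ∉ S := fun h => absurd (hjmax s h) (not_le.mpr hgt)
          have : AddMonoidAlgebra.single (0 : Fin k →₀ ℕ) (a.coeff s) * g = 0 := by
            by_contra h
            exact hsnS (Finset.mem_filter.mpr ⟨hs, h⟩)
          rw [Finsupp.sum]
          apply Finset.sum_eq_zero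
          intro l hl
          have hsl : a.coeff s * g.coeff l = 0 := by
            have := Finsupp.ext_iff.mp (congrArg AddMonoidAlgebra.coeff this) l
            rwa [AddMonoidAlgebra.coeff_single_zero_mul] at this
            
          rw [hsl]
          simp
      · intro h
        exact absurd hjsupp h
    rw [heval] at h0
    exact h0
  -- build a smaller annihilator
  set h : AddMonoidAlgebra K (Fin k →₀ ℕ) :=
    AddMonoidAlgebra.single (0 : Fin k →₀ ℕ) (a.coeff j) * g with hhdef
  have hhapp : ∀ l, h.coeff l = a.coeff j * g.coeff l := fun l => by
    rw [hhdef, AddMonoidAlgebra.coeff_single_zero_mul]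
  have hhann : ∀ a' ∈ A, a' * h = 0 := by
    intro a' ha'
    rw [hhdef, ← mul_assoc]
    exact hgann _ (hA a' ha' _)
  obtain ⟨e, he1, he2, he3⟩ := lead_spec h hjne
  have heD : e ∈ D := ⟨h, hjne, hhann, he1, he2⟩
  have helt : e < d := by
    have hofe : h.coeff (ofLex e) ≠ 0 := he1
    have hlemem : ofLex e ∈ h.coeff.support := Finsupp.mem_support_iff.mpr hofe
    have hle : toLex (ofLex e) ≤ d := by
      by_contra hc
      push_neg at hc
      have : g.coeff (ofLex e) = 0 := hgtop _ hc
      exact hofe (by rw [hhapp, this, mul_zero])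
    have hnee : toLex (ofLex e) ≠ d := by
      intro hc
      have : ofLex e = d' := by rw [hd', ← hc]; rfl
      exact hofe (by rw [hhapp, this, hkey])
    exact lt_of_le_of_ne (by simpa using hle) (by simpa using hnee)
  exact hmin e heD helt
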